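/- Two-term functional relation for lower characteristic (1,1): for all real a, c and all complex u, v, θ[a,c;1,1](u,v) · θ[a,c;0,0](u,v) = Θ[a,c;1,1](2u,2v) · Θ[0,0;1,1](0,0) + Θ[a+1,c+1;1,1](2u,2v) · Θ[1,1;1,1](0,0). -/

import Mathlib

open Complex

/-- Genus-two theta function with real characteristics `a c b d`
(upper characteristics `a, c`, lower characteristics `b, d`),
moduli `τ₁ τ₂ τ₁₂` and complex arguments `x y`. -/
noncomputable def theta (τ₁ τ₂ τ₁₂ : ℂ) (a c b d : ℝ) (x y : ℂ) : ℂ :=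
  ∑' p : ℤ × ℤ,
    Complex.exp
      ((Real.pi : ℂ) * Complex.I *
          (τ₁ * ((p.1 : ℂ) + (a : ℂ) / 2) ^ 2 + τ₂ * ((p.2 : ℂ) + (c : ℂ) / 2) ^ 2 +
            2 * τ₁₂ * ((p.1 : ℂ) + (a : ℂ) / 2) * ((p.2 : ℂ) + (c : ℂ) / 2)) +
        2 * (Real.pi : ℂ) * Complex.I *
          (((p.1 : ℂ) + (a : ℂ) / 2) * (x + (b : ℂ) / 2) +
            ((p.2 : ℂ) + (c : ℂ) / 2) * (y + (d : ℂ) / 2)))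

/-- The same theta function with doubled moduli `2τ₁, 2τ₂, 2τ₁₂`. -/
noncomputable def Theta2 (τ₁ τ₂ τ₁₂ : ℂ) (a c b d : ℝ) (x y : ℂ) : ℂ :=
  theta (2 * τ₁) (2 * τ₂) (2 * τ₁₂) a c b d x y

/-- The general term of the genus-two theta series. -/
noncomputable def tTerm (τ₁ τ₂ τ₁₂ : ℂ) (a c b d : ℝ) (x y : ℂ) (p : ℤ × ℤ) : ℂ :=
  Complex.exp
    ((Real.pi : ℂ) * Complex.I *
        (τ₁ * ((p.1 : ℂ) + (a : ℂ) / 2) ^ 2 + τ₂ * ((p.2 : ℂ) + (c : ℂ) / 2) ^ 2 +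
          2 * τ₁₂ * ((p.1 : ℂ) + (a : ℂ) / 2) * ((p.2 : ℂ) + (c : ℂ) / 2)) +
      2 * (Real.pi : ℂ) * Complex.I *
        (((p.1 : ℂ) + (a : ℂ) / 2) * (x + (b : ℂ) / 2) +
          ((p.2 : ℂ) + (c : ℂ) / 2) * (y + (d : ℂ) / 2)))

lemma theta_eq_tsum (τ₁ τ₂ τ₁₂ : ℂ) (a c b d : ℝ) (x y : ℂ) :
    theta τ₁ τ₂ τ₁₂ a c b d x y = ∑' p : ℤ × ℤ, tTerm τ₁ τ₂ τ₁₂ a c b d x y p := rfl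

lemma norm_tTerm (τ₁ τ₂ τ₁₂ : ℂ) (a c b d : ℝ) (x y : ℂ) (p : ℤ × ℤ) :
    ‖tTerm τ₁ τ₂ τ₁₂ a c b d x y p‖ =
      Real.exp (-Real.pi * (τ₁.im * ((p.1:ℝ) + a/2)^2 + τ₂.im * ((p.2:ℝ) + c/2)^2
          + 2*τ₁₂.im*((p.1:ℝ) + a/2)*((p.2:ℝ) + c/2))
        - 2*Real.pi*(((p.1:ℝ) + a/2) * x.im + ((p.2:ℝ) + c/2) * y.im)) := by
  rw [tTerm, Complex.norm_exp]
  congr 1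
  simp [Complex.add_re, Complex.mul_re, Complex.mul_im, Complex.I_re, Complex.I_im, pow_two]
  ring

lemma posdef_eps {Y₁ Y₂ Y₁₂ : ℝ} (h1 : 0 < Y₁) (h2 : 0 < Y₂) (h : Y₁₂^2 < Y₁*Y₂) :
    ∃ ε > 0, ∀ s t : ℝ, ε * (s^2 + t^2) ≤ Y₁ * s^2 + Y₂ * t^2 + 2*Y₁₂*s*t := by
  refine ⟨min (Y₁/2) (min (Y₂/2) ((Y₁*Y₂ - Y₁₂^2)/(Y₁+Y₂))), ?_, ?_⟩
  · have h0 : 0 < Y₁*Y₂ - Y₁₂^2 := by linarith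
    have : 0 < (Y₁*Y₂ - Y₁₂^2)/(Y₁+Y₂) := by positivity
    simp only [lt_min_iff]
    exact ⟨by linarith, by linarith, this⟩
  · intro s t
    set ε := min (Y₁/2) (min (Y₂/2) ((Y₁*Y₂ - Y₁₂^2)/(Y₁+Y₂))) with hε
    have he1 : ε ≤ Y₁/2 := min_le_left _ _
    have he2 : ε ≤ Y₂/2 := le_trans (min_le_right _ _) (min_le_left _ _)
    have he3 : ε ≤ (Y₁*Y₂ - Y₁₂^2)/(Y₁+Y₂) := le_trans (min_le_right _ _) (min_le_right _ _)
    have he3' : ε * (Y₁+Y₂) ≤ Y₁*Y₂ - Y₁₂^2 := (le_div_iff₀ (by linarith)).mp he3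
    have hd : Y₁₂^2 ≤ (Y₁ - ε)*(Y₂ - ε) := by nlinarith [sq_nonneg ε]
    nlinarith [sq_nonneg ((Y₁ - ε)*s + Y₁₂*t), sq_nonneg t, mul_pos h1 h2]

lemma summable_norm_tTerm {τ₁ τ₂ τ₁₂ : ℂ}
    (hτ₁ : 0 < τ₁.im) (hτ₂ : 0 < τ₂.im) (hτ : τ₁₂.im ^ 2 < τ₁.im * τ₂.im)
    (a c b d : ℝ) (x y : ℂ) :
    Summable (fun p : ℤ × ℤ => ‖tTerm τ₁ τ₂ τ₁₂ a c b d x y p‖) := by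
  obtain ⟨ε, hε, hQ⟩ := posdef_eps hτ₁ hτ₂ hτ
  have hπ := Real.pi_pos
  set K : ℝ := Real.pi*ε*(a^2+c^2)/4 + Real.pi* |a| * |x.im| + Real.pi* |c| * |y.im| with hK
  have hT : 0 < ε/2 := by linarith
  have hf1 : Summable (fun m : ℤ => Real.exp (-Real.pi * (ε/2 * (m:ℝ)^2 - 2* |x.im| * |(m:ℝ)|))) := by
    simpa using summable_pow_mul_jacobiTheta₂_term_bound |x.im| hT 0
  have hf2 : Summable (fun n : ℤ => Real.exp (-Real.pi * (ε/2 * (n:ℝ)^2 - 2* |y.im| * |(n:ℝ)|))) := by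
    simpa using summable_pow_mul_jacobiTheta₂_term_bound |y.im| hT 0
  have hg : Summable (fun p : ℤ × ℤ =>
      Real.exp K * (Real.exp (-Real.pi * (ε/2 * (p.1:ℝ)^2 - 2* |x.im| * |(p.1:ℝ)|)) *
        Real.exp (-Real.pi * (ε/2 * (p.2:ℝ)^2 - 2* |y.im| * |(p.2:ℝ)|)))) :=
    (hf1.mul_of_nonneg hf2 (fun _ => Real.exp_nonneg _) (fun _ => Real.exp_nonneg _)).mul_left _
  refine Summable.of_nonneg_of_le (fun _ => norm_nonneg _) (fun p => ?_) hg
  rw [norm_tTerm, ← Real.exp_add, ← Real.exp_add]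
  apply Real.exp_le_exp.mpr
  set s : ℝ := (p.1:ℝ) + a/2 with hs
  set t : ℝ := (p.2:ℝ) + c/2 with ht
  have hQ' := hQ s t
  have hs2 : (p.1:ℝ)^2/2 - (a/2)^2 ≤ s^2 := by rw [hs]; nlinarith [sq_nonneg ((p.1:ℝ) + a)]
  have ht2 : (p.2:ℝ)^2/2 - (c/2)^2 ≤ t^2 := by rw [ht]; nlinarith [sq_nonneg ((p.2:ℝ) + c)]
  have hsx : -(s * x.im) ≤ (|(p.1:ℝ)| + |a|/2) * |x.im| := by
    calc -(s * x.im) ≤ |s * x.im| := neg_le_abs _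
    _ = |s| * |x.im| := abs_mul _ _
    _ ≤ (|(p.1:ℝ)| + |a|/2) * |x.im| := by
        apply mul_le_mul_of_nonneg_right _ (abs_nonneg _)
        calc |s| ≤ |(p.1:ℝ)| + |a/2| := abs_add_le _ _
        _ = |(p.1:ℝ)| + |a|/2 := by rw [abs_div]; norm_num
  have hty : -(t * y.im) ≤ (|(p.2:ℝ)| + |c|/2) * |y.im| := by
    calc -(t * y.im) ≤ |t * y.im| := neg_le_abs _
    _ = |t| * |y.im| := abs_mul _ _
    _ ≤ (|(p.2:ℝ)| + |c|/2) * |y.im| := by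
        apply mul_le_mul_of_nonneg_right _ (abs_nonneg _)
        calc |t| ≤ |(p.2:ℝ)| + |c/2| := abs_add_le _ _
        _ = |(p.2:ℝ)| + |c|/2 := by rw [abs_div]; norm_num
  clear_value s t
  have A1 := mul_le_mul_of_nonneg_left hQ' hπ.le
  have A2 := mul_le_mul_of_nonneg_left hs2 (mul_pos hπ hε).le
  have A3 := mul_le_mul_of_nonneg_left ht2 (mul_pos hπ hε).le
  have A4 := mul_le_mul_of_nonneg_left hsx (by linarith : (0:ℝ) ≤ 2*Real.pi)
  have A5 := mul_le_mul_of_nonneg_left hty (by linarith : (0:ℝ) ≤ 2*Real.pi)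
  rw [hK]
  linarith [A1, A2, A3, A4, A5]

/-- The key algebraic identity: a product of two theta terms equals a product of two
doubled-moduli theta terms under the index substitution. -/
lemma term_mul (τ₁ τ₂ τ₁₂ : ℂ) (a c : ℝ) (u v : ℂ) (ε δ k l K L : ℤ) :
    tTerm τ₁ τ₂ τ₁₂ a c 1 1 u v (k + K + ε, l + L + δ) *
      tTerm τ₁ τ₂ τ₁₂ a c 0 0 u v (k - K, l - L) =
    tTerm (2*τ₁) (2*τ₂) (2*τ₁₂) (a + ε) (c + δ) 1 1 (2*u) (2*v) (k, l) *
      tTerm (2*τ₁) (2*τ₂) (2*τ₁₂) (ε : ℝ) (δ : ℝ) 1 1 0 0 (K, L) := by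
  simp only [tTerm, ← Complex.exp_add]
  congr 1
  push_cast
  ring

/-- Vanishing of the theta constant with characteristics `[0,1;1,1]`. -/
lemma tsum_vanish01 (T₁ T₂ T₁₂ : ℂ) :
    ∑' p : ℤ × ℤ, tTerm T₁ T₂ T₁₂ 0 1 1 1 0 0 p = 0 := by
  set f := tTerm T₁ T₂ T₁₂ 0 1 1 1 0 0 with hf
  have hinv : Function.Involutive (fun p : ℤ × ℤ => (-p.1, -p.2 - 1)) := by
    intro p; simp
  set σ : ℤ × ℤ ≃ ℤ × ℤ := hinv.toPerm _ with hσ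
  have key : ∀ p : ℤ × ℤ, f (σ p) = - f p := by
    intro ⟨m, n⟩
    show f (-m, -n-1) = - f (m, n)
    rw [hf]
    simp only [tTerm]
    rw [show ((Real.pi : ℂ) * Complex.I *
        (T₁ * (((-m : ℤ) : ℂ) + ((0:ℝ):ℂ) / 2) ^ 2 + T₂ * (((-n-1 : ℤ) : ℂ) + ((1:ℝ):ℂ) / 2) ^ 2 +
          2 * T₁₂ * (((-m : ℤ) : ℂ) + ((0:ℝ):ℂ) / 2) * (((-n-1 : ℤ) : ℂ) + ((1:ℝ):ℂ) / 2)) +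
      2 * (Real.pi : ℂ) * Complex.I *
        ((((-m : ℤ) : ℂ) + ((0:ℝ):ℂ) / 2) * (0 + ((1:ℝ):ℂ) / 2) +
          (((-n-1 : ℤ) : ℂ) + ((1:ℝ):ℂ) / 2) * (0 + ((1:ℝ):ℂ) / 2))) =
      ((Real.pi : ℂ) * Complex.I *
        (T₁ * ((m : ℂ) + ((0:ℝ):ℂ) / 2) ^ 2 + T₂ * ((n : ℂ) + ((1:ℝ):ℂ) / 2) ^ 2 +
          2 * T₁₂ * ((m : ℂ) + ((0:ℝ):ℂ) / 2) * ((n : ℂ) + ((1:ℝ):ℂ) / 2)) +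
      2 * (Real.pi : ℂ) * Complex.I *
        (((m : ℂ) + ((0:ℝ):ℂ) / 2) * (0 + ((1:ℝ):ℂ) / 2) +
          ((n : ℂ) + ((1:ℝ):ℂ) / 2) * (0 + ((1:ℝ):ℂ) / 2)))
      + ((-m - n - 1 : ℤ) : ℂ) * (2 * (Real.pi : ℂ) * Complex.I) + (Real.pi : ℂ) * Complex.I
      from by push_cast; ring]
    rw [Complex.exp_add, Complex.exp_add, Complex.exp_int_mul_two_pi_mul_I, Complex.exp_pi_mul_I]
    ring
  have h := σ.tsum_eq f
  have h2 : ∑' p, f (σ p) = - ∑' p, f p := by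
    rw [tsum_congr key, tsum_neg]
  rw [h] at h2
  linear_combination h2 / 2

/-- Vanishing of the theta constant with characteristics `[1,0;1,1]`. -/
lemma tsum_vanish10 (T₁ T₂ T₁₂ : ℂ) :
    ∑' p : ℤ × ℤ, tTerm T₁ T₂ T₁₂ 1 0 1 1 0 0 p = 0 := by
  set f := tTerm T₁ T₂ T₁₂ 1 0 1 1 0 0 with hf
  have hinv : Function.Involutive (fun p : ℤ × ℤ => (-p.1 - 1, -p.2)) := by
    intro p; simp
  set σ : ℤ × ℤ ≃ ℤ × ℤ := hinv.toPerm _ with hσ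
  have key : ∀ p : ℤ × ℤ, f (σ p) = - f p := by
    intro ⟨m, n⟩
    show f (-m-1, -n) = - f (m, n)
    rw [hf]
    simp only [tTerm]
    rw [show ((Real.pi : ℂ) * Complex.I *
        (T₁ * (((-m-1 : ℤ) : ℂ) + ((1:ℝ):ℂ) / 2) ^ 2 + T₂ * (((-n : ℤ) : ℂ) + ((0:ℝ):ℂ) / 2) ^ 2 +
          2 * T₁₂ * (((-m-1 : ℤ) : ℂ) + ((1:ℝ):ℂ) / 2) * (((-n : ℤ) : ℂ) + ((0:ℝ):ℂ) / 2)) +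
      2 * (Real.pi : ℂ) * Complex.I *
        ((((-m-1 : ℤ) : ℂ) + ((1:ℝ):ℂ) / 2) * (0 + ((1:ℝ):ℂ) / 2) +
          (((-n : ℤ) : ℂ) + ((0:ℝ):ℂ) / 2) * (0 + ((1:ℝ):ℂ) / 2))) =
      ((Real.pi : ℂ) * Complex.I *
        (T₁ * ((m : ℂ) + ((1:ℝ):ℂ) / 2) ^ 2 + T₂ * ((n : ℂ) + ((0:ℝ):ℂ) / 2) ^ 2 +
          2 * T₁₂ * ((m : ℂ) + ((1:ℝ):ℂ) / 2) * ((n : ℂ) + ((0:ℝ):ℂ) / 2)) +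
      2 * (Real.pi : ℂ) * Complex.I *
        (((m : ℂ) + ((1:ℝ):ℂ) / 2) * (0 + ((1:ℝ):ℂ) / 2) +
          ((n : ℂ) + ((0:ℝ):ℂ) / 2) * (0 + ((1:ℝ):ℂ) / 2)))
      + ((-m - n - 1 : ℤ) : ℂ) * (2 * (Real.pi : ℂ) * Complex.I) + (Real.pi : ℂ) * Complex.I
      from by push_cast; ring]
    rw [Complex.exp_add, Complex.exp_add, Complex.exp_int_mul_two_pi_mul_I, Complex.exp_pi_mul_I]
    ring
  have h := σ.tsum_eq f
  have h2 : ∑' p, f (σ p) = - ∑' p, f p := by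
    rw [tsum_congr key, tsum_neg]
  rw [h] at h2
  linear_combination h2 / 2

/-- Parity decomposition of `ℤ² × ℤ²`. -/
def pairEquiv : (Bool × Bool) × ((ℤ × ℤ) × (ℤ × ℤ)) ≃ (ℤ × ℤ) × (ℤ × ℤ) where
  toFun q :=
    ((q.2.1.1 + q.2.2.1 + (if q.1.1 then 1 else 0), q.2.1.2 + q.2.2.2 + (if q.1.2 then 1 else 0)),
     (q.2.1.1 - q.2.2.1, q.2.1.2 - q.2.2.2))
  invFun q :=
    ((decide ((q.1.1 + q.2.1) % 2 = 1), decide ((q.1.2 + q.2.2) % 2 = 1)),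
     (((q.1.1 + q.2.1 - (q.1.1 + q.2.1) % 2) / 2, (q.1.2 + q.2.2 - (q.1.2 + q.2.2) % 2) / 2),
      ((q.1.1 - q.2.1 - (q.1.1 + q.2.1) % 2) / 2, (q.1.2 - q.2.2 - (q.1.2 + q.2.2) % 2) / 2)))
  left_inv := by
    rintro ⟨⟨b1, b2⟩, ⟨⟨k, l⟩, ⟨K, L⟩⟩⟩
    cases b1 <;> cases b2 <;>
      simp only [Prod.mk.injEq, decide_eq_true_eq, decide_eq_false_iff_not, if_true, if_false,
        Bool.false_eq_true, ite_true, ite_false] <;>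
      refine ⟨⟨?_, ?_⟩, ⟨?_, ?_⟩, ?_, ?_⟩ <;> omega
  right_inv := by
    rintro ⟨⟨m, n⟩, ⟨m', n'⟩⟩
    rcases Int.emod_two_eq (m + m') with h1 | h1 <;> rcases Int.emod_two_eq (n + n') with h2 | h2 <;>
      simp only [h1, h2, Prod.mk.injEq] <;> norm_num <;>
      refine ⟨⟨?_, ?_⟩, ?_, ?_⟩ <;> omega

theorem two_term_relation_11 (τ₁ τ₂ τ₁₂ : ℂ)
    (hτ₁ : 0 < τ₁.im) (hτ₂ : 0 < τ₂.im) (hτ : τ₁₂.im ^ 2 < τ₁.im * τ₂.im)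
    (a c : ℝ) (u v : ℂ) :
    theta τ₁ τ₂ τ₁₂ a c 1 1 u v * theta τ₁ τ₂ τ₁₂ a c 0 0 u v =
      Theta2 τ₁ τ₂ τ₁₂ a c 1 1 (2 * u) (2 * v) * Theta2 τ₁ τ₂ τ₁₂ 0 0 1 1 0 0 +
        Theta2 τ₁ τ₂ τ₁₂ (a + 1) (c + 1) 1 1 (2 * u) (2 * v) *
          Theta2 τ₁ τ₂ τ₁₂ 1 1 1 1 0 0 := by
  -- summability data
  have hd₁ : 0 < (2*τ₁).im := by simp [hτ₁]
  have hd₂ : 0 < (2*τ₂).im := by simp [hτ₂]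
  have hd : (2*τ₁₂).im ^ 2 < (2*τ₁).im * (2*τ₂).im := by
    have e : ∀ z : ℂ, (2*z).im = 2*z.im := fun z => by simp
    rw [e, e, e]
    nlinarith
  have h11 := summable_norm_tTerm hτ₁ hτ₂ hτ a c 1 1 u v
  have h00 := summable_norm_tTerm hτ₁ hτ₂ hτ a c 0 0 u v
  set T1 := tTerm τ₁ τ₂ τ₁₂ a c 1 1 u v with hT1
  set T2 := tTerm τ₁ τ₂ τ₁₂ a c 0 0 u v with hT2
  set f : (ℤ × ℤ) × (ℤ × ℤ) → ℂ := fun q => T1 q.1 * T2 q.2 with hfdef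
  have hsum : Summable f := summable_mul_of_summable_norm h11 h00
  have hsum' : Summable (fun x : (Bool × Bool) × ((ℤ × ℤ) × (ℤ × ℤ)) => f (pairEquiv x)) :=
    (Equiv.summable_iff pairEquiv).mpr hsum
  -- expand the left side as a quadruple sum and regroup by parity
  rw [theta_eq_tsum, theta_eq_tsum, tsum_mul_tsum_of_summable_norm h11 h00]
  rw [← Equiv.tsum_eq pairEquiv f, Summable.tsum_prod' hsum' (fun b => hsum'.prod_factor b), tsum_fintype]
  rw [Fintype.sum_prod_type, Fintype.sum_bool, Fintype.sum_bool, Fintype.sum_bool]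
  -- the four parity-class sums
  have hclass : ∀ b1 b2 : Bool, ∀ A C : ℝ, ∀ e d : ℤ,
      ((if b1 then (1:ℤ) else 0) = e) → ((if b2 then (1:ℤ) else 0) = d) →
      (A = a + (e:ℝ)) → (C = c + (d:ℝ)) →
      ∑' s : (ℤ × ℤ) × (ℤ × ℤ), f (pairEquiv ((b1, b2), s)) =
        (∑' p : ℤ × ℤ, tTerm (2*τ₁) (2*τ₂) (2*τ₁₂) A C 1 1 (2*u) (2*v) p) *
        (∑' p : ℤ × ℤ, tTerm (2*τ₁) (2*τ₂) (2*τ₁₂) (e:ℝ) (d:ℝ) 1 1 0 0 p) := by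
    intro b1 b2 A C e d he hd' hA hC
    have hF := summable_norm_tTerm hd₁ hd₂ hd A C 1 1 (2*u) (2*v)
    have hG := summable_norm_tTerm hd₁ hd₂ hd (e:ℝ) (d:ℝ) 1 1 0 0
    refine (tsum_congr ?_).trans (tsum_mul_tsum_of_summable_norm hF hG).symm
    rintro ⟨⟨k, l⟩, ⟨K, L⟩⟩
    have := term_mul τ₁ τ₂ τ₁₂ a c u v e d k l K L
    rw [← hA, ← hC] at this
    simp only [hfdef, pairEquiv, Equiv.coe_fn_mk, he, hd', hT1, hT2]
    exact this
  rw [hclass false false a c 0 0 (by simp) (by simp) (by simp) (by simp),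
      hclass false true a (c+1) 0 1 (by simp) (by simp) (by simp) (by simp),
      hclass true false (a+1) c 1 0 (by simp) (by simp) (by simp) (by simp),
      hclass true true (a+1) (c+1) 1 1 (by simp) (by simp) (by simp) (by simp)]
  have v01 : (∑' p : ℤ × ℤ, tTerm (2*τ₁) (2*τ₂) (2*τ₁₂) ((0:ℤ):ℝ) ((1:ℤ):ℝ) 1 1 0 0 p) = 0 := by
    simpa using tsum_vanish01 (2*τ₁) (2*τ₂) (2*τ₁₂)
  have v10 : (∑' p : ℤ × ℤ, tTerm (2*τ₁) (2*τ₂) (2*τ₁₂) ((1:ℤ):ℝ) ((0:ℤ):ℝ) 1 1 0 0 p) = 0 := by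
    simpa using tsum_vanish10 (2*τ₁) (2*τ₂) (2*τ₁₂)
  rw [v01, v10]
  simp only [Theta2, theta_eq_tsum, Int.cast_zero, Int.cast_one, mul_zero, zero_mul, add_zero,
    zero_add]
  ring
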